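/- Let K be a field of characteristic zero and W a finite-dimensional K-vector space. The free Lie algebra functor commutes with taking homology: if (W, d) is a complex of K-vector spaces (d² = 0, d a differential on W), and d is extended to the free Lie algebra L(W) as a Lie derivation, then the natural map L(H(W,d)) → H(L(W), d) is an isomorphism of Lie algebras. -/

import Mathlib

/-- The parity automorphism of the tensor algebra induced by a parity operator `ε` on `W`
(the operator acting by `+1` on the even part and `-1` on the odd part of a graded
module). -/
noncomputable def parityT {K W : Type*} [Field K] [AddCommGroup W] [Module K W]
    (ε : W →ₗ[K] W) : TensorAlgebra K W →ₐ[K] TensorAlgebra K W :=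
  TensorAlgebra.lift K ((TensorAlgebra.ι K) ∘ₗ ε)

/-- The free graded Lie algebra on a graded module `W` (with grading encoded by the parity
operator `ε`), realized inside the tensor algebra as the smallest subspace containing `W`
and closed under the graded commutator `[a,b] = ab - (-1)^{|a||b|}ba`; here
`(-1)^{|a||b|} ba = ba - ½(b - εb)(a - εa)` bilinearly. -/
noncomputable def gradedFreeLie (K : Type*) {W : Type*} [Field K] [AddCommGroup W]
    [Module K W] (ε : W →ₗ[K] W) : Submodule K (TensorAlgebra K W) :=
  sInf {p : Submodule K (TensorAlgebra K W) |
    Set.range (TensorAlgebra.ι K : W →ₗ[K] TensorAlgebra K W) ⊆ ↑p ∧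
    ∀ a ∈ p, ∀ b ∈ p,
      a * b - b * a + (2 : K)⁻¹ • ((b - parityT ε b) * (a - parityT ε a)) ∈ p}

/-- The homology `ker d / im d` of a differential `d` on `W`. -/
abbrev Homology {K W : Type*} [Field K] [AddCommGroup W] [Module K W] (d : W →ₗ[K] W) :
    Type _ :=
  ↥(LinearMap.ker d) ⧸ (LinearMap.range d).comap (LinearMap.ker d).subtype

namespace Stmt18
variable {K W : Type*} [Field K] [AddCommGroup W] [Module K W]

@[simp] theorem parityT_ι (ε : W →ₗ[K] W) (w : W) :
    parityT ε (TensorAlgebra.ι K w) = TensorAlgebra.ι K (ε w) :=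
  TensorAlgebra.lift_ι_apply _ _

theorem parityT_parityT {ε : W →ₗ[K] W} (hε2 : ε ∘ₗ ε = LinearMap.id) (x : TensorAlgebra K W) :
    parityT ε (parityT ε x) = x := by
  have h : (parityT ε).comp (parityT ε) = AlgHom.id K (TensorAlgebra K W) := by
    apply TensorAlgebra.hom_ext
    ext w
    simpa using congrArg (TensorAlgebra.ι K) (LinearMap.congr_fun hε2 w)
  exact AlgHom.congr_fun h x

/-- The graded bracket. -/
noncomputable def br (ε : W →ₗ[K] W) (a b : TensorAlgebra K W) : TensorAlgebra K W :=
  a * b - b * a + (2 : K)⁻¹ • ((b - parityT ε b) * (a - parityT ε a))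

theorem gradedFreeLie_le {ε : W →ₗ[K] W} {M : Submodule K (TensorAlgebra K W)}
    (h1 : Set.range (TensorAlgebra.ι K : W →ₗ[K] TensorAlgebra K W) ⊆ ↑M)
    (h2 : ∀ a ∈ M, ∀ b ∈ M, br ε a b ∈ M) : gradedFreeLie K ε ≤ M :=
  sInf_le ⟨h1, h2⟩

theorem ι_mem_gradedFreeLie (ε : W →ₗ[K] W) (w : W) :
    TensorAlgebra.ι K w ∈ gradedFreeLie K ε := by
  rw [gradedFreeLie, Submodule.mem_sInf]
  exact fun p hp => hp.1 ⟨w, rfl⟩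

theorem br_mem_gradedFreeLie {ε : W →ₗ[K] W} {a b : TensorAlgebra K W}
    (ha : a ∈ gradedFreeLie K ε) (hb : b ∈ gradedFreeLie K ε) :
    br ε a b ∈ gradedFreeLie K ε := by
  rw [gradedFreeLie, Submodule.mem_sInf] at *
  exact fun p hp => hp.2 a (ha p hp) b (hb p hp)

theorem map_br {W' : Type*} [AddCommGroup W'] [Module K W'] {ε : W →ₗ[K] W} {ε' : W' →ₗ[K] W'}
    (f : TensorAlgebra K W →ₐ[K] TensorAlgebra K W')
    (hf : ∀ x, f (parityT ε x) = parityT ε' (f x)) (a b : TensorAlgebra K W) :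
    f (br ε a b) = br ε' (f a) (f b) := by
  simp [br, hf, mul_sub, sub_mul, map_sub]

/-- The parity map preserves the free graded Lie algebra. -/
theorem parityT_mem_gradedFreeLie {ε : W →ₗ[K] W} (hε2 : ε ∘ₗ ε = LinearMap.id)
    {x : TensorAlgebra K W} (hx : x ∈ gradedFreeLie K ε) :
    parityT ε x ∈ gradedFreeLie K ε := by
  have : gradedFreeLie K ε ≤ (gradedFreeLie K ε).comap (parityT ε).toLinearMap := by
    apply gradedFreeLie_le
    · rintro _ ⟨w, rfl⟩
      simpa using ι_mem_gradedFreeLie ε (ε w)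
    · intro a ha b hb
      simp only [Submodule.mem_comap, AlgHom.toLinearMap_apply] at *
      rw [map_br (parityT ε) (fun _ => rfl) a b]
      exact br_mem_gradedFreeLie ha hb
  exact this hx



/-- auxiliary linear map into 2×2 matrices used to build twisted derivations -/
noncomputable def twistAux (ε f : W →ₗ[K] W) :
    W →ₗ[K] Matrix (Fin 2) (Fin 2) (TensorAlgebra K W) where
  toFun w := Matrix.of ![![TensorAlgebra.ι K w, 0],
    ![TensorAlgebra.ι K (f w), TensorAlgebra.ι K (ε w)]]
  map_add' x y := by
    ext i j
    fin_cases i <;> fin_cases j <;>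
      simp [Matrix.add_apply, map_add]
  map_smul' c x := by
    ext i j
    fin_cases i <;> fin_cases j <;>
      simp [Matrix.smul_apply, map_smul]

noncomputable def twistHom (ε f : W →ₗ[K] W) :
    TensorAlgebra K W →ₐ[K] Matrix (Fin 2) (Fin 2) (TensorAlgebra K W) :=
  TensorAlgebra.lift K (twistAux ε f)

theorem twistHom_inv (ε f : W →ₗ[K] W) (a : TensorAlgebra K W) :
    twistHom ε f a 0 0 = a ∧ twistHom ε f a 0 1 = 0 ∧ twistHom ε f a 1 1 = parityT ε a := by
  induction a using TensorAlgebra.induction with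
  | algebraMap r =>
      simp [Matrix.algebraMap_matrix_apply, AlgHom.commutes]
  | ι w =>
      simp [twistHom, TensorAlgebra.lift_ι_apply, twistAux, parityT,
        TensorAlgebra.lift_ι_apply]
  | mul a b iha ihb =>
      obtain ⟨ha1, ha2, ha3⟩ := iha
      obtain ⟨hb1, hb2, hb3⟩ := ihb
      simp [map_mul, Matrix.mul_apply, Fin.sum_univ_two, ha1, ha2, ha3, hb1, hb2, hb3]
  | add a b iha ihb =>
      obtain ⟨ha1, ha2, ha3⟩ := iha
      obtain ⟨hb1, hb2, hb3⟩ := ihb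
      simp [map_add, Matrix.add_apply, ha1, ha2, ha3, hb1, hb2, hb3]

/-- the twisted-derivation extension of `f` to the tensor algebra -/
noncomputable def twist (ε f : W →ₗ[K] W) :
    TensorAlgebra K W →ₗ[K] TensorAlgebra K W where
  toFun a := twistHom ε f a 1 0
  map_add' a b := by simp [map_add, Matrix.add_apply]
  map_smul' c a := by simp [map_smul, Matrix.smul_apply]

@[simp] theorem twist_ι (ε f : W →ₗ[K] W) (w : W) :
    twist ε f (TensorAlgebra.ι K w) = TensorAlgebra.ι K (f w) := by
  simp [twist, twistHom, TensorAlgebra.lift_ι_apply, twistAux]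

theorem twist_mul (ε f : W →ₗ[K] W) (a b : TensorAlgebra K W) :
    twist ε f (a * b) = twist ε f a * b + parityT ε a * twist ε f b := by
  obtain ⟨ha1, -, ha3⟩ := twistHom_inv ε f a
  obtain ⟨hb1, -, -⟩ := twistHom_inv ε f b
  simp only [twist, LinearMap.coe_mk, AddHom.coe_mk, map_mul, Matrix.mul_apply,
    Fin.sum_univ_two, ha1, ha3, hb1]


section twisted
variable {ε : W →ₗ[K] W}

theorem tw_one (X : TensorAlgebra K W →ₗ[K] TensorAlgebra K W)
    (hX : ∀ a b, X (a * b) = X a * b + parityT ε a * X b) : X 1 = 0 := by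
  have h := hX 1 1
  simp only [mul_one, map_one, one_mul] at h
  exact (left_eq_add.mp h)

theorem tw_algebraMap (X : TensorAlgebra K W →ₗ[K] TensorAlgebra K W)
    (hX : ∀ a b, X (a * b) = X a * b + parityT ε a * X b) (r : K) :
    X (algebraMap K (TensorAlgebra K W) r) = 0 := by
  rw [Algebra.algebraMap_eq_smul_one, map_smul, tw_one X hX, smul_zero]

/-- a twisted derivation whose generator-level map anticommutes with `ε`
anticommutes with the parity automorphism -/
theorem tw_parity (hε2 : ε ∘ₗ ε = LinearMap.id)
    (X : TensorAlgebra K W →ₗ[K] TensorAlgebra K W) (f : W →ₗ[K] W)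
    (hXι : ∀ w, X (TensorAlgebra.ι K w) = TensorAlgebra.ι K (f w))
    (hX : ∀ a b, X (a * b) = X a * b + parityT ε a * X b)
    (hfε : f ∘ₗ ε = -(ε ∘ₗ f)) (x : TensorAlgebra K W) :
    X (parityT ε x) = - parityT ε (X x) := by
  induction x using TensorAlgebra.induction with
  | algebraMap r =>
      rw [AlgHom.commutes, tw_algebraMap X hX]
      simp
  | ι w =>
      rw [parityT_ι, hXι, hXι, parityT_ι]
      have := LinearMap.congr_fun hfε w
      simp only [LinearMap.comp_apply, LinearMap.neg_apply] at this
      rw [this, map_neg]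
  | mul a b iha ihb =>
      simp only [map_mul, hX, iha, ihb, parityT_parityT hε2, map_add]
      noncomm_ring
  | add a b iha ihb =>
      rw [map_add, map_add, map_add, iha, ihb, map_add, neg_add]

theorem tw_sq (hε2 : ε ∘ₗ ε = LinearMap.id)
    (X : TensorAlgebra K W →ₗ[K] TensorAlgebra K W) (f : W →ₗ[K] W)
    (hXι : ∀ w, X (TensorAlgebra.ι K w) = TensorAlgebra.ι K (f w))
    (hX : ∀ a b, X (a * b) = X a * b + parityT ε a * X b)
    (hXP : ∀ x, X (parityT ε x) = - parityT ε (X x))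
    (hff : f ∘ₗ f = 0) (x : TensorAlgebra K W) : X (X x) = 0 := by
  induction x using TensorAlgebra.induction with
  | algebraMap r => rw [tw_algebraMap X hX, map_zero]
  | ι w =>
      rw [hXι, hXι]
      have := LinearMap.congr_fun hff w
      simp only [LinearMap.comp_apply, LinearMap.zero_apply] at this
      rw [this, map_zero]
  | mul a b iha ihb =>
      rw [hX]
      simp only [map_add, hX, iha, ihb, hXP, parityT_parityT hε2]
      noncomm_ring
  | add a b iha ihb => rw [map_add, map_add, iha, ihb, add_zero]

/-- composing an algebra map after a twisted derivation: vanishing criterion -/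
theorem hom_comp_tw_eq_zero {W' : Type*} [AddCommGroup W'] [Module K W']
    (g : TensorAlgebra K W →ₐ[K] TensorAlgebra K W')
    (X : TensorAlgebra K W →ₗ[K] TensorAlgebra K W)
    (hX : ∀ a b, X (a * b) = X a * b + parityT ε a * X b)
    (h0 : ∀ w, g (X (TensorAlgebra.ι K w)) = 0) (x : TensorAlgebra K W) :
    g (X x) = 0 := by
  induction x using TensorAlgebra.induction with
  | algebraMap r => rw [tw_algebraMap X hX, map_zero]
  | ι w => exact h0 w
  | mul a b iha ihb => rw [hX, map_add, map_mul, map_mul, iha, ihb, zero_mul, mul_zero,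
      add_zero]
  | add a b iha ihb => rw [map_add, map_add, iha, ihb, add_zero]

/-- composing a twisted derivation after an algebra map: vanishing criterion -/
theorem tw_comp_hom_eq_zero {W' : Type*} [AddCommGroup W'] [Module K W']
    (g : TensorAlgebra K W' →ₐ[K] TensorAlgebra K W)
    (X : TensorAlgebra K W →ₗ[K] TensorAlgebra K W)
    (hX : ∀ a b, X (a * b) = X a * b + parityT ε a * X b)
    (h0 : ∀ w, X (g (TensorAlgebra.ι K w)) = 0) (x : TensorAlgebra K W') :
    X (g x) = 0 := by
  induction x using TensorAlgebra.induction with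
  | algebraMap r => rw [AlgHom.commutes, tw_algebraMap X hX]
  | ι w => exact h0 w
  | mul a b iha ihb => rw [map_mul, hX, iha, ihb, zero_mul, mul_zero, add_zero]
  | add a b iha ihb => rw [map_add, map_add, iha, ihb, add_zero]

end twisted

section charzero
variable [CharZero K] {ε : W →ₗ[K] W}

theorem tw_br (hε2 : ∀ x : TensorAlgebra K W, parityT ε (parityT ε x) = x)
    (X : TensorAlgebra K W →ₗ[K] TensorAlgebra K W)
    (hX : ∀ a b, X (a * b) = X a * b + parityT ε a * X b)
    (hXP : ∀ a, X (parityT ε a) = - parityT ε (X a)) (a b : TensorAlgebra K W) :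
    X (br ε a b) = br ε (X a) b + br ε (parityT ε a) (X b) := by
  simp only [br, map_add, map_sub, map_smul, hX, map_mul, hXP, hε2, mul_sub, sub_mul,
    smul_sub, smul_add, mul_neg, neg_mul, sub_neg_eq_add]
  match_scalars <;> norm_num

/-- a twisted derivation preserves the free graded Lie algebra -/
theorem tw_gradedFreeLie (hε2 : ε ∘ₗ ε = LinearMap.id)
    (X : TensorAlgebra K W →ₗ[K] TensorAlgebra K W) (f : W →ₗ[K] W)
    (hXι : ∀ w, X (TensorAlgebra.ι K w) = TensorAlgebra.ι K (f w))
    (hX : ∀ a b, X (a * b) = X a * b + parityT ε a * X b)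
    (hXP : ∀ a, X (parityT ε a) = - parityT ε (X a))
    {x : TensorAlgebra K W} (hx : x ∈ gradedFreeLie K ε) : X x ∈ gradedFreeLie K ε := by
  have hle : gradedFreeLie K ε ≤ gradedFreeLie K ε ⊓ (gradedFreeLie K ε).comap X := by
    apply gradedFreeLie_le
    · rintro _ ⟨w, rfl⟩
      exact ⟨ι_mem_gradedFreeLie ε w, by
        simpa [Submodule.mem_comap, hXι] using ι_mem_gradedFreeLie ε (f w)⟩
    · rintro a ⟨ha1, ha2⟩ b ⟨hb1, hb2⟩
      refine ⟨br_mem_gradedFreeLie ha1 hb1, ?_⟩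
      have ha2' : X a ∈ gradedFreeLie K ε := ha2
      have hb2' : X b ∈ gradedFreeLie K ε := hb2
      show X (br ε a b) ∈ gradedFreeLie K ε
      rw [tw_br (parityT_parityT hε2) X hX hXP a b]
      exact Submodule.add_mem _
        (br_mem_gradedFreeLie ha2' hb1)
        (br_mem_gradedFreeLie (parityT_mem_gradedFreeLie hε2 ha1) hb2')
  exact (hle hx).2

theorem br_zero_left (b : TensorAlgebra K W) : br ε 0 b = 0 := by
  simp [br]

theorem br_add_left (a a' b : TensorAlgebra K W) :
    br ε (a + a') b = br ε a b + br ε a' b := by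
  simp only [br, map_add, add_mul, mul_add, sub_mul, mul_sub]
  match_scalars <;> ring

theorem br_add_right (a b b' : TensorAlgebra K W) :
    br ε a (b + b') = br ε a b + br ε a b' := by
  simp only [br, map_add, add_mul, mul_add, sub_mul, mul_sub]
  match_scalars <;> ring

end charzero

/-- independence of eigenvectors with distinct natural eigenvalues -/
theorem indepnat {V : Type*} [CharZero K] [AddCommGroup V] [Module K V] (N : V →ₗ[K] V)
    (s : Finset ℕ) (g : ℕ → V) (hg : ∀ k ∈ s, N (g k) = (k : K) • g k)
    (hsum : ∑ k ∈ s, g k = 0) : ∀ k ∈ s, g k = 0 := by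
  classical
  induction s using Finset.induction_on generalizing g with
  | empty => intro k hk; simp at hk
  | @insert a s ha ih =>
      rw [Finset.sum_insert ha] at hsum
      have hN : N (g a) + ∑ k ∈ s, N (g k) = 0 := by
        rw [← map_sum, ← map_add, hsum, map_zero]
      have h1 : (a : K) • g a + ∑ k ∈ s, (k : K) • g k = 0 := by
        rw [← hg a (Finset.mem_insert_self a s)]
        convert hN using 2
        exact Finset.sum_congr rfl fun k hk => (hg k (Finset.mem_insert_of_mem hk)).symm
      have h2 : ∑ k ∈ s, ((k : K) - (a : K)) • g k = 0 := by
        have hga : ∑ k ∈ s, g k = - g a := by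
          rw [eq_neg_iff_add_eq_zero, add_comm]; exact hsum
        calc ∑ k ∈ s, ((k : K) - (a : K)) • g k
            = ∑ k ∈ s, (k : K) • g k - (a : K) • ∑ k ∈ s, g k := by
              rw [Finset.smul_sum, ← Finset.sum_sub_distrib]
              exact Finset.sum_congr rfl fun k _ => by rw [sub_smul]
          _ = 0 := by
              rw [hga, smul_neg, sub_neg_eq_add, add_comm]
              exact h1
      have h3 := ih (fun k => ((k : K) - (a : K)) • g k)
        (fun k hk => by
          rw [map_smul, hg k (Finset.mem_insert_of_mem hk), smul_comm]) h2
      have h4 : ∀ k ∈ s, g k = 0 := by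
        intro k hk
        have hka : ((k : K) - (a : K)) ≠ 0 := by
          have : k ≠ a := fun h => ha (h ▸ hk)
          simpa [sub_eq_zero] using this
        have := h3 k hk
        rcases smul_eq_zero.mp this with h | h
        · exact absurd h hka
        · exact h
      intro k hk
      rcases Finset.mem_insert.mp hk with rfl | hk'
      · have : ∑ k ∈ s, g k = 0 := Finset.sum_congr rfl h4 ▸ Finset.sum_const_zero
        rw [this, add_zero] at hsum
        exact hsum
      · exact h4 k hk'


/-- decompose an element of a countable supremum of submodules as a finite sum -/
theorem decomp {V : Type*} [AddCommGroup V] [Module K V] (F : ℕ → Submodule K V) {x : V}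
    (hx : x ∈ ⨆ k, F k) :
    ∃ (s : Finset ℕ) (g : ℕ → V), (∀ k, g k ∈ F k) ∧ x = ∑ k ∈ s, g k := by
  classical
  refine Submodule.iSup_induction (motive := fun y : V =>
    ∃ (s : Finset ℕ) (g : ℕ → V), (∀ k, g k ∈ F k) ∧ y = ∑ k ∈ s, g k) F hx ?_ ?_ ?_
  · intro i y hy
    refine ⟨{i}, fun k => if k = i then y else 0, fun k => ?_, by simp⟩
    by_cases h : k = i
    · subst h; simpa using hy
    · simp [h]
  · exact ⟨∅, fun _ => 0, fun k => Submodule.zero_mem _, by simp⟩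
  · rintro y z ⟨s, g, hg, rfl⟩ ⟨t, g', hg', rfl⟩
    refine ⟨s ∪ t, fun k => (if k ∈ s then g k else 0) + (if k ∈ t then g' k else 0),
      fun k => Submodule.add_mem _ (by split <;> simp [hg k]) (by split <;> simp [hg' k]),
      ?_⟩
    rw [Finset.sum_add_distrib]
    congr 1
    · rw [Finset.sum_ite_mem, Finset.union_inter_cancel_left]
    · rw [Finset.sum_ite_mem, Finset.union_inter_cancel_right]


section linalg
variable [CharZero K] [FiniteDimensional K W]

theorem linalg_package (εW : W →ₗ[K] W) (hε2 : εW ∘ₗ εW = LinearMap.id)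
    (d : W →ₗ[K] W) (hd2 : d ∘ₗ d = 0) (hodd : d ∘ₗ εW = -(εW ∘ₗ d))
    (hker : ∀ x ∈ LinearMap.ker d, εW x ∈ LinearMap.ker d)
    (εH : Homology d →ₗ[K] Homology d)
    (hεH : ∀ w : ↥(LinearMap.ker d),
      εH (Submodule.Quotient.mk w) = Submodule.Quotient.mk ⟨εW ↑w, hker ↑w w.2⟩)
    (σ : Homology d →ₗ[K] ↥(LinearMap.ker d))
    (hσ : ((LinearMap.range d).comap (LinearMap.ker d).subtype).mkQ ∘ₗ σ = LinearMap.id)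
    (hσε : ∀ x : Homology d, (↑(σ (εH x)) : W) = εW ↑(σ x)) :
    ∃ (ρ : W →ₗ[K] Homology d) (h : W →ₗ[K] W),
      (∀ x, ρ ((LinearMap.ker d).subtype (σ x)) = x) ∧
      (∀ w, ρ (εW w) = εH (ρ w)) ∧
      (∀ w, ρ (d w) = 0) ∧
      (∀ w, h (h w) = 0) ∧
      (h ∘ₗ εW = -(εW ∘ₗ h)) ∧
      (∀ w, d (h w) + h (d w) = w - (LinearMap.ker d).subtype (σ (ρ w))) ∧
      (∀ w, h ((LinearMap.ker d).subtype (σ (ρ w))) = 0) ∧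
      (∀ w, ρ (h w) = 0) := by
  classical
  set kd := LinearMap.ker d with hkd
  set Q : Submodule K ↥kd := (LinearMap.range d).comap kd.subtype with hQ
  obtain ⟨U, hU⟩ := Submodule.exists_isCompl kd
  set π₀ : W →ₗ[K] ↥kd := kd.linearProjOfIsCompl U hU with hπ₀
  have hd_eps : ∀ w, d (εW w) = - εW (d w) := fun w => by
    have := LinearMap.congr_fun hodd w
    simpa using this
  have hee : ∀ w, εW (εW w) = w := fun w => LinearMap.congr_fun hε2 w
  set εK : ↥kd →ₗ[K] ↥kd := εW.restrict (fun x hx => hker x hx) with hεK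
  have hεK_apply : ∀ u : ↥kd, (↑(εK u) : W) = εW ↑u := fun u => rfl
  set et : W →ₗ[K] ↥kd := (2 : K)⁻¹ • (π₀ + εK ∘ₗ π₀ ∘ₗ εW) with het
  have hπ₀_id : ∀ u : ↥kd, π₀ ↑u = u := fun u => Submodule.linearProjOfIsCompl_apply_left hU u
  have het_id : ∀ u : ↥kd, et ↑u = u := by
    intro u
    have h1 : π₀ ↑u = u := hπ₀_id u
    have h2 : εW ↑u ∈ kd := hker ↑u u.2
    have h3 : π₀ (εW ↑u) = ⟨εW ↑u, h2⟩ := hπ₀_id ⟨εW ↑u, h2⟩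
    have h4 : εK ⟨εW ↑u, h2⟩ = u := by
      apply Subtype.ext
      rw [hεK_apply]
      exact hee ↑u
    rw [het]
    simp only [LinearMap.smul_apply, LinearMap.add_apply, LinearMap.comp_apply, h1, h3, h4]
    rw [← two_smul K u, smul_smul]
    norm_num
  have het_eps : ∀ w, et (εW w) = εK (et w) := by
    intro w
    have hKK : ∀ u : ↥kd, εK (εK u) = u := fun u => Subtype.ext (by
      rw [hεK_apply, hεK_apply]; exact hee ↑u)
    rw [het]
    simp only [LinearMap.smul_apply, LinearMap.add_apply, LinearMap.comp_apply, map_smul,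
      map_add, hee, hKK]
    rw [add_comm]
  set e : W →ₗ[K] W := kd.subtype ∘ₗ et with he
  have he_mem : ∀ w, e w ∈ kd := fun w => (et w).2
  have he_id : ∀ w ∈ kd, e w = w := fun w hw => by
    rw [he]; simp only [LinearMap.comp_apply]
    rw [show w = ↑(⟨w, hw⟩ : ↥kd) from rfl, het_id]
    rfl
  set ρ : W →ₗ[K] Homology d := Q.mkQ ∘ₗ et with hρ
  set σ' : W →ₗ[K] W := kd.subtype ∘ₗ σ ∘ₗ ρ with hσ'p
  -- ρ ∘ σ' inclusion = id
  have hρσ : ∀ x, ρ (kd.subtype (σ x)) = x := by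
    intro x
    rw [hρ]
    simp only [LinearMap.comp_apply]
    rw [show et (kd.subtype (σ x)) = σ x from het_id (σ x)]
    exact LinearMap.congr_fun hσ x
  have hρε : ∀ w, ρ (εW w) = εH (ρ w) := by
    intro w
    rw [hρ]
    simp only [LinearMap.comp_apply, het_eps]
    rw [Submodule.mkQ_apply, Submodule.mkQ_apply, hεH (et w)]
    congr 1
  have hρd : ∀ w, ρ (d w) = 0 := by
    intro w
    have hdw : d w ∈ kd := by
      rw [hkd, LinearMap.mem_ker]
      exact LinearMap.congr_fun hd2 w
    rw [hρ]
    simp only [LinearMap.comp_apply]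
    rw [show et (d w) = ⟨d w, hdw⟩ from het_id ⟨d w, hdw⟩, Submodule.mkQ_apply,
      Submodule.Quotient.mk_eq_zero]
    exact ⟨w, rfl⟩
  set p : W →ₗ[K] W := kd.subtype ∘ₗ σ ∘ₗ ρ with hp
  have hpσ : ∀ x, p (kd.subtype (σ x)) = kd.subtype (σ x) := fun x => by
    rw [hp]; simp only [LinearMap.comp_apply, hρσ x]
  have hpp : ∀ w, p (p w) = p w := fun w => hpσ (ρ w)
  have hpe : ∀ w, p w ∈ kd := fun w => (σ (ρ w)).2
  -- the complement C
  set C : Submodule K W := LinearMap.ker e with hC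
  have hdisj : ∀ w ∈ kd, w ∈ C → w = 0 := fun w hw hwC => by
    have := he_id w hw
    rw [LinearMap.mem_ker.mp hwC] at this
    exact this.symm
  have hcompl : IsCompl kd C := by
    constructor
    · rw [disjoint_iff_inf_le]
      rintro w ⟨hw1, hw2⟩
      exact hdisj w hw1 hw2
    · rw [codisjoint_iff_le_sup]
      intro w _
      refine Submodule.mem_sup.mpr ⟨e w, he_mem w, w - e w, ?_, by abel⟩
      rw [hC, LinearMap.mem_ker, map_sub, he_id (e w) (he_mem w), sub_self]
  -- d restricts to an iso C ≃ range d
  set f₀ : ↥C →ₗ[K] ↥(LinearMap.range d) :=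
    (d.domRestrict C).codRestrict (LinearMap.range d)
      (fun c => LinearMap.mem_range_self d ↑c) with hf₀
  have hf₀_apply : ∀ c : ↥C, (↑(f₀ c) : W) = d ↑c := fun c => rfl
  have hf₀_inj : Function.Injective f₀ := by
    intro c1 c2 hc
    have : d ↑c1 = d ↑c2 := by rw [← hf₀_apply, ← hf₀_apply, hc]
    have hmem : (↑c1 - ↑c2 : W) ∈ kd := by
      rw [hkd, LinearMap.mem_ker, map_sub, this, sub_self]
    have : (↑c1 - ↑c2 : W) = 0 := hdisj _ hmem (Submodule.sub_mem _ c1.2 c2.2)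
    exact Subtype.ext (sub_eq_zero.mp this)
  have hfinrank : Module.finrank K ↥C = Module.finrank K ↥(LinearMap.range d) := by
    have h1 := Submodule.finrank_add_eq_of_isCompl hcompl
    have h2 := LinearMap.finrank_range_add_finrank_ker d
    rw [← hkd] at h2
    omega
  have hf₀_surj : Function.Surjective f₀ :=
    (LinearMap.injective_iff_surjective_of_finrank_eq_finrank hfinrank).mp hf₀_inj
  set dC : ↥C ≃ₗ[K] ↥(LinearMap.range d) := LinearEquiv.ofBijective f₀ ⟨hf₀_inj, hf₀_surj⟩
    with hdC
  have hdC_apply : ∀ c : ↥C, (↑(dC c) : W) = d ↑c := fun c => rfl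
  have hdC_symm : ∀ (y : ↥(LinearMap.range d)), d ↑(dC.symm y) = ↑y := by
    intro y
    rw [← hdC_apply (dC.symm y), dC.apply_symm_apply]
  -- the projection onto the image part
  set πB : W →ₗ[K] W := e - p with hπB
  have hπB_mem : ∀ w, πB w ∈ LinearMap.range d := by
    intro w
    have hmem : et w - σ (ρ w) ∈ Q := by
      rw [hQ, ← Submodule.Quotient.mk_eq_zero, ← Submodule.mkQ_apply, map_sub]
      rw [show Q.mkQ (et w) = ρ w from rfl]
      rw [show Q.mkQ (σ (ρ w)) = ρ w from LinearMap.congr_fun hσ (ρ w), sub_self]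
    have := hmem
    rw [hQ, Submodule.mem_comap] at this
    simpa [hπB, he, hp, map_sub] using this
  set πB' : W →ₗ[K] ↥(LinearMap.range d) := πB.codRestrict (LinearMap.range d) hπB_mem
    with hπB'
  set h : W →ₗ[K] W := C.subtype ∘ₗ (dC.symm : ↥(LinearMap.range d) →ₗ[K] ↥C) ∘ₗ πB'
    with hh
  have hh_apply : ∀ w, h w = ↑(dC.symm (πB' w)) := fun w => rfl
  have hπB'_apply : ∀ w, (↑(πB' w) : W) = e w - p w := fun w => rfl
  have hdh : ∀ w, d (h w) = πB w := by
    intro w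
    rw [hh_apply, hdC_symm (πB' w)]
    rfl
  -- h ∘ d
  have hhd : ∀ w, h (d w) = w - e w := by
    intro w
    have hdw : d w ∈ kd := LinearMap.mem_ker.mpr (LinearMap.congr_fun hd2 w)
    have hwc : w - e w ∈ C := by
      rw [hC, LinearMap.mem_ker, map_sub, he_id (e w) (he_mem w), sub_self]
    have hπBd : πB' (d w) = dC ⟨w - e w, hwc⟩ := by
      apply Subtype.ext
      rw [hπB'_apply, hdC_apply]
      have h1 : e (d w) = d w := he_id _ hdw
      have h2 : p (d w) = 0 := by
        rw [hp]; simp only [LinearMap.comp_apply, hρd w, map_zero]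
      rw [h1, h2, sub_zero, map_sub]
      have h3 : d (e w) = 0 := he_mem w
      rw [h3, sub_zero]
    rw [hh_apply, hπBd, dC.symm_apply_apply]
  -- main homotopy identity
  have hmain : ∀ w, d (h w) + h (d w) = w - p w := by
    intro w
    rw [hdh, hhd]
    have : πB w = e w - p w := rfl
    rw [this]
    abel
  -- h ∘ h = 0
  have hρh : ∀ w, ρ (h w) = 0 := by
    intro w
    have hhC : h w ∈ C := (dC.symm (πB' w)).2
    have : et (h w) = 0 := by
      have : e (h w) = 0 := LinearMap.mem_ker.mp hhC
      rw [he] at this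
      exact Subtype.ext (by simpa using this)
    rw [hρ]
    simp only [LinearMap.comp_apply, this, map_zero]
  have hπBh : ∀ w, πB (h w) = 0 := by
    intro w
    have hhC : h w ∈ C := (dC.symm (πB' w)).2
    have h1 : e (h w) = 0 := LinearMap.mem_ker.mp hhC
    have h2 : p (h w) = 0 := by
      rw [hp]; simp only [LinearMap.comp_apply, hρh w, map_zero]
    rw [hπB]
    simp only [LinearMap.sub_apply, h1, h2, sub_zero]
  have hh2 : ∀ w, h (h w) = 0 := by
    intro w
    rw [hh_apply (h w)]
    have : πB' (h w) = 0 := Subtype.ext (by rw [hπB'_apply]; exact hπBh w)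
    rw [this, map_zero, Submodule.coe_zero]
  -- h ∘ p = 0
  have hhp : ∀ w, h (p w) = 0 := by
    intro w
    have h1 : e (p w) = p w := he_id _ (hpe w)
    have h2 : πB (p w) = 0 := by
      rw [hπB]; simp only [LinearMap.sub_apply, h1, hpp w, sub_self]
    rw [hh_apply]
    have : πB' (p w) = 0 := Subtype.ext (by rw [hπB'_apply]; exact h2)
    rw [this, map_zero, Submodule.coe_zero]
  -- h anticommutes with ε
  have heε : ∀ w, e (εW w) = εW (e w) := by
    intro w
    rw [he]
    simp only [LinearMap.comp_apply, het_eps]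
    rfl
  have hpε : ∀ w, p (εW w) = εW (p w) := by
    intro w
    rw [hp]
    simp only [LinearMap.comp_apply, hρε w]
    exact hσε (ρ w)
  have hπBε : ∀ w, πB (εW w) = εW (πB w) := by
    intro w
    rw [hπB]
    simp only [LinearMap.sub_apply, heε, hpε, map_sub]
  have hCε : ∀ c ∈ C, εW c ∈ C := by
    intro c hc
    rw [hC, LinearMap.mem_ker] at *
    rw [heε, hc, map_zero]
  have hhε : ∀ w, h (εW w) = - εW (h w) := by
    intro w
    set c : ↥C := dC.symm (πB' w) with hc
    have hmc : - εW ↑c ∈ C := by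
      have := hCε ↑c c.2
      exact Submodule.neg_mem _ this
    have key : dC ⟨- εW ↑c, hmc⟩ = πB' (εW w) := by
      apply Subtype.ext
      rw [hdC_apply]
      show d (- εW ↑c) = πB (εW w)
      rw [map_neg, hd_eps, neg_neg]
      rw [show d ↑c = πB w from by rw [hc, hdC_symm (πB' w)]; rfl]
      exact (hπBε w).symm
    rw [hh_apply, ← key, dC.symm_apply_apply]
    show (↑(⟨- εW ↑c, hmc⟩ : ↥C) : W) = - εW (h w)
    rw [hh_apply]
  refine ⟨ρ, h, hρσ, hρε, hρd, hh2, ?_, ?_, ?_, hρh⟩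
  · apply LinearMap.ext
    intro w
    simp only [LinearMap.comp_apply, LinearMap.neg_apply]
    exact hhε w
  · intro w
    exact hmain w
  · intro w
    exact hhp w

end linalg

section brextra
variable [CharZero K] {ε : W →ₗ[K] W}

theorem br_zero_right (a : TensorAlgebra K W) : br ε a 0 = 0 := by
  simp [br]

theorem br_ker (X : TensorAlgebra K W →ₗ[K] TensorAlgebra K W)
    (hX : ∀ a b, X (a * b) = X a * b + parityT ε a * X b)
    (hXP : ∀ a, X (parityT ε a) = - parityT ε (X a))
    (hε2 : ∀ x : TensorAlgebra K W, parityT ε (parityT ε x) = x)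
    {a b : TensorAlgebra K W} (ha : X a = 0) (hb : X b = 0) : X (br ε a b) = 0 := by
  rw [tw_br hε2 X hX hXP, ha, hb, br_zero_left, br_zero_right, add_zero]

end brextra
end Stmt18

set_option maxHeartbeats 2000000 in
open Stmt18 in
/-- over a field `K` of characteristic zero, the free (graded) Lie algebra
functor commutes with homology.  Let `(W, d)` be a finite-dimensional complex of
`K`-vector spaces (with grading encoded by the parity operator `εW`, `d` odd of square
zero), and let `D` be the extension of `d` to the tensor algebra as a graded derivation of
square zero; `D` restricts to a Lie derivation of the free graded Lie algebra
`L(W) ⊆ T(W)`.  Then the natural map `L(H(W,d)) → H(L(W), D)`, induced by a choice `σ` of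
(parity-compatible) inclusion of cycles, is an isomorphism (it lands in cycles and the
induced map to homology is bijective, hence an isomorphism of Lie algebras). -/
theorem stmt18 {K W : Type*} [Field K] [CharZero K] [AddCommGroup W] [Module K W]
    [FiniteDimensional K W]
    (εW : W →ₗ[K] W) (hε2 : εW ∘ₗ εW = LinearMap.id)
    (d : W →ₗ[K] W) (hd2 : d ∘ₗ d = 0) (hodd : d ∘ₗ εW = -(εW ∘ₗ d))
    (D : TensorAlgebra K W →ₗ[K] TensorAlgebra K W)
    (hDι : D ∘ₗ (TensorAlgebra.ι K : W →ₗ[K] TensorAlgebra K W)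
      = (TensorAlgebra.ι K : W →ₗ[K] TensorAlgebra K W) ∘ₗ d)
    (hD2 : D ∘ₗ D = 0)
    (hLeib : ∀ a b : TensorAlgebra K W, D (a * b) = D a * b + parityT εW a * D b)
    (hker : ∀ x ∈ LinearMap.ker d, εW x ∈ LinearMap.ker d)
    (εH : Homology d →ₗ[K] Homology d)
    (hεH : ∀ w : ↥(LinearMap.ker d),
      εH (Submodule.Quotient.mk w) = Submodule.Quotient.mk ⟨εW ↑w, hker ↑w w.2⟩)
    (σ : Homology d →ₗ[K] ↥(LinearMap.ker d))
    (hσ : ((LinearMap.range d).comap (LinearMap.ker d).subtype).mkQ ∘ₗ σ = LinearMap.id)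
    (hσε : ∀ x : Homology d, (↑(σ (εH x)) : W) = εW ↑(σ x)) :
    let Lf : Submodule K (TensorAlgebra K W) := gradedFreeLie K εW
    let Z : Submodule K (TensorAlgebra K W) := Lf ⊓ LinearMap.ker D
    let Bd : Submodule K (TensorAlgebra K W) := Submodule.map D Lf ⊓ Z
    let Φ : TensorAlgebra K (Homology d) →ₐ[K] TensorAlgebra K W :=
      TensorAlgebra.lift K
        ((TensorAlgebra.ι K : W →ₗ[K] TensorAlgebra K W) ∘ₗ
          ((LinearMap.ker d).subtype ∘ₗ σ))
    ∃ hcyc : ∀ x ∈ gradedFreeLie K εH, Φ x ∈ Z,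
      Function.Bijective (fun x : ↥(gradedFreeLie K εH) =>
        (Submodule.Quotient.mk (⟨Φ ↑x, hcyc ↑x x.2⟩ : ↥Z) : ↥Z ⧸ Bd.comap Z.subtype)) := by
  classical
  intro Lf Z Bd Φ
  obtain ⟨ρ, hmt, hρσ, hρε, hρd, hh2, hhε, hmain, hhp, hρh⟩ :=
    linalg_package εW hε2 d hd2 hodd hker εH hεH σ hσ hσε
  set ι' : W →ₗ[K] TensorAlgebra K W := TensorAlgebra.ι K with hι'
  have P2 : ∀ x : TensorAlgebra K W, parityT εW (parityT εW x) = x := parityT_parityT hε2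
  have hDι' : ∀ w, D (ι' w) = ι' (d w) := fun w => LinearMap.congr_fun hDι w
  have hD2' : ∀ x, D (D x) = 0 := fun x => LinearMap.congr_fun hD2 x
  have hDP : ∀ x, D (parityT εW x) = - parityT εW (D x) :=
    tw_parity hε2 D d hDι' hLeib hodd
  -- the twisted extension of the homotopy
  set Ht : TensorAlgebra K W →ₗ[K] TensorAlgebra K W := twist εW hmt with hHt
  have hHι : ∀ w, Ht (ι' w) = ι' (hmt w) := fun w => twist_ι εW hmt w
  have hHmul : ∀ a b, Ht (a * b) = Ht a * b + parityT εW a * Ht b := twist_mul εW hmt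
  have hHP : ∀ x, Ht (parityT εW x) = - parityT εW (Ht x) :=
    tw_parity hε2 Ht hmt hHι hHmul hhε
  have hH2 : ∀ x, Ht (Ht x) = 0 :=
    tw_sq hε2 Ht hmt hHι hHmul hHP (LinearMap.ext fun w => hh2 w)
  -- the Laplace-type operator
  set N : TensorAlgebra K W →ₗ[K] TensorAlgebra K W := D ∘ₗ Ht + Ht ∘ₗ D with hN
  have hNapp : ∀ x, N x = D (Ht x) + Ht (D x) := fun x => rfl
  have hNmul : ∀ a b, N (a * b) = N a * b + a * N b := by
    intro a b
    simp only [hNapp, hHmul, hLeib, map_add, hDP, hHP, P2]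
    noncomm_ring
  set pm : W →ₗ[K] W := (LinearMap.ker d).subtype ∘ₗ σ ∘ₗ ρ with hpm
  have hpm_app : ∀ w, pm w = (LinearMap.ker d).subtype (σ (ρ w)) := fun w => rfl
  have hpm_ker : ∀ w, pm w ∈ LinearMap.ker d := fun w => (σ (ρ w)).2
  have hpmpm : ∀ w, pm (pm w) = pm w := by
    intro w
    rw [hpm_app, hpm_app]
    congr 1
    rw [show ρ ((LinearMap.ker d).subtype (σ (ρ w))) = ρ w from hρσ (ρ w)]
  have hNι : ∀ w, N (ι' w) = ι' w - ι' (pm w) := by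
    intro w
    rw [hNapp, hHι, hDι', hDι', hHι, ← map_add, hmain w, map_sub]
    rfl
  have hND : ∀ x, N (D x) = D (N x) := by
    intro x
    simp only [hNapp, map_add, hD2', map_zero, add_zero, zero_add]
  have hNH : ∀ x, N (Ht x) = Ht (N x) := by
    intro x
    simp only [hNapp, map_add, hH2, map_zero, add_zero, zero_add]
  have hNP : ∀ x, N (parityT εW x) = parityT εW (N x) := by
    intro x
    simp only [hNapp, hHP, hDP, map_neg, neg_neg, map_add]
  -- eigenspaces of N
  set E : ℕ → Submodule K (TensorAlgebra K W) :=
    fun k => LinearMap.ker (N - (k : K) • LinearMap.id) with hE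
  have hmemE : ∀ (k : ℕ) (x : TensorAlgebra K W), x ∈ E k ↔ N x = (k : K) • x := by
    intro k x
    simp [hE, LinearMap.mem_ker, LinearMap.sub_apply, sub_eq_zero]
  have hED : ∀ k, ∀ x ∈ E k, D x ∈ E k := by
    intro k x hx
    rw [hmemE] at *
    rw [hND, hx, map_smul]
  have hEH : ∀ k, ∀ x ∈ E k, Ht x ∈ E k := by
    intro k x hx
    rw [hmemE] at *
    rw [hNH, hx, map_smul]
  have hEP : ∀ k, ∀ x ∈ E k, parityT εW x ∈ E k := by
    intro k x hx
    rw [hmemE] at *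
    rw [hNP, hx, map_smul]
  have hEmul : ∀ j k, ∀ x ∈ E j, ∀ y ∈ E k, x * y ∈ E (j + k) := by
    intro j k x hx y hy
    rw [hmemE] at *
    rw [hNmul, hx, hy, Nat.cast_add, add_smul, smul_mul_assoc, mul_smul_comm]
  -- the homology-side algebra maps
  set Ψ : TensorAlgebra K W →ₐ[K] TensorAlgebra K (Homology d) :=
    TensorAlgebra.lift K ((TensorAlgebra.ι K : Homology d →ₗ[K] _) ∘ₗ ρ) with hΨ
  have hΨι : ∀ w, Ψ (ι' w) = TensorAlgebra.ι K (ρ w) := fun w =>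
    TensorAlgebra.lift_ι_apply _ _
  have hΦι : ∀ x, Φ (TensorAlgebra.ι K x) = ι' ((LinearMap.ker d).subtype (σ x)) := fun x =>
    TensorAlgebra.lift_ι_apply _ _
  have hΨΦ : ∀ t, Ψ (Φ t) = t := by
    intro t
    have : Ψ.comp Φ = AlgHom.id K (TensorAlgebra K (Homology d)) := by
      apply TensorAlgebra.hom_ext
      apply LinearMap.ext
      intro x
      simp only [LinearMap.comp_apply, AlgHom.toLinearMap_apply, AlgHom.comp_apply,
        AlgHom.coe_id, id_eq]
      rw [hΦι, hΨι, hρσ]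
    exact AlgHom.congr_fun this t
  set q : TensorAlgebra K W →ₐ[K] TensorAlgebra K W := Φ.comp Ψ with hq
  have hqι : ∀ w, q (ι' w) = ι' (pm w) := by
    intro w
    rw [hq, AlgHom.comp_apply, hΨι, hΦι, hpm_app]
  have hqq : ∀ x, q (q x) = q x := by
    intro x
    rw [hq]
    simp only [AlgHom.comp_apply, hΨΦ]
  have hΦP : ∀ t, Φ (parityT εH t) = parityT εW (Φ t) := by
    have : Φ.comp (parityT εH) = (parityT εW).comp Φ := by
      apply TensorAlgebra.hom_ext
      apply LinearMap.ext
      intro x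
      simp only [LinearMap.comp_apply, AlgHom.toLinearMap_apply, AlgHom.comp_apply]
      rw [parityT_ι, hΦι, hΦι, parityT_ι]
      congr 1
      exact hσε x
    exact fun t => AlgHom.congr_fun this t
  have hΨP : ∀ x, Ψ (parityT εW x) = parityT εH (Ψ x) := by
    have : Ψ.comp (parityT εW) = (parityT εH).comp Ψ := by
      apply TensorAlgebra.hom_ext
      apply LinearMap.ext
      intro w
      simp only [LinearMap.comp_apply, AlgHom.toLinearMap_apply, AlgHom.comp_apply]
      rw [parityT_ι, hΨι, hΨι, parityT_ι, hρε]
    exact fun t => AlgHom.congr_fun this t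
  have hqP : ∀ x, q (parityT εW x) = parityT εW (q x) := by
    intro x
    rw [hq]
    simp only [AlgHom.comp_apply, hΨP, hΦP]
  have hΨD : ∀ x, Ψ (D x) = 0 := by
    apply hom_comp_tw_eq_zero Ψ D hLeib
    intro w
    rw [hDι', hΨι, show ρ (d w) = 0 from hρd w, map_zero]
  have hΨH : ∀ x, Ψ (Ht x) = 0 := by
    apply hom_comp_tw_eq_zero Ψ Ht hHmul
    intro w
    rw [hHι, hΨι, show ρ (hmt w) = 0 from hρh w, map_zero]
  have hDq : ∀ x, D (q x) = 0 := by
    apply tw_comp_hom_eq_zero q D hLeib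
    intro w
    rw [hqι, hDι', show d (pm w) = 0 from hpm_ker w, map_zero]
  have hHq : ∀ x, Ht (q x) = 0 := by
    apply tw_comp_hom_eq_zero q Ht hHmul
    intro w
    rw [hqι, hHι, show hmt (pm w) = 0 from hhp w, map_zero]
  have hNq : ∀ x, N (q x) = 0 := by
    intro x
    rw [hNapp, hHq, hDq, map_zero, map_zero, add_zero]
  have hqN : ∀ x, q (N x) = 0 := by
    intro x
    rw [hq, AlgHom.comp_apply, hNapp, map_add, hΨD, hΨH, add_zero, map_zero]
  have hrangeq : ∀ x, q x ∈ E 0 := by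
    intro x
    rw [hmemE, hNq, Nat.cast_zero, zero_smul]
  -- Lf stability
  have hLfP : ∀ x ∈ Lf, parityT εW x ∈ Lf := fun x hx => parityT_mem_gradedFreeLie hε2 hx
  have hLfD : ∀ x ∈ Lf, D x ∈ Lf := fun x hx =>
    tw_gradedFreeLie hε2 D d hDι' hLeib hDP hx
  have hLfH : ∀ x ∈ Lf, Ht x ∈ Lf := fun x hx =>
    tw_gradedFreeLie hε2 Ht hmt hHι hHmul hHP hx
  -- cycles
  have hZbr : ∀ a ∈ Z, ∀ b ∈ Z, br εW a b ∈ Z := by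
    rintro a ⟨ha1, ha2⟩ b ⟨hb1, hb2⟩
    exact ⟨br_mem_gradedFreeLie ha1 hb1,
      LinearMap.mem_ker.mpr (br_ker D hLeib hDP P2 (LinearMap.mem_ker.mp ha2)
        (LinearMap.mem_ker.mp hb2))⟩
  have hcyc : ∀ x ∈ gradedFreeLie K εH, Φ x ∈ Z := by
    intro x hx
    have hle : gradedFreeLie K εH ≤ Z.comap Φ.toLinearMap := by
      apply gradedFreeLie_le
      · rintro _ ⟨v, rfl⟩
        show Φ (TensorAlgebra.ι K v) ∈ Z
        rw [hΦι]
        refine ⟨ι_mem_gradedFreeLie εW _, LinearMap.mem_ker.mpr ?_⟩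
        rw [hDι', show d ((LinearMap.ker d).subtype (σ v)) = 0 from (σ v).2, map_zero]
      · intro a ha b hb
        have ha' : Φ a ∈ Z := ha
        have hb' : Φ b ∈ Z := hb
        show Φ (br εH a b) ∈ Z
        rw [map_br Φ hΦP]
        exact hZbr _ ha' _ hb'
    exact hle hx
  -- Ψ maps Lf into the free graded Lie algebra on homology
  have hΨLf : ∀ x ∈ Lf, Ψ x ∈ gradedFreeLie K εH := by
    intro x hx
    have hle : Lf ≤ (gradedFreeLie K εH).comap Ψ.toLinearMap := by
      apply gradedFreeLie_le
      · rintro _ ⟨w, rfl⟩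
        show Ψ (ι' w) ∈ gradedFreeLie K εH
        rw [hΨι]
        exact ι_mem_gradedFreeLie εH _
      · intro a ha b hb
        have ha' : Ψ a ∈ gradedFreeLie K εH := ha
        have hb' : Ψ b ∈ gradedFreeLie K εH := hb
        show Ψ (br εW a b) ∈ gradedFreeLie K εH
        rw [map_br Ψ hΨP]
        exact br_mem_gradedFreeLie ha' hb'
    exact hle hx
  -- bracket respects eigenspaces
  have hbrE : ∀ j k, ∀ x ∈ E j, ∀ y ∈ E k, br εW x y ∈ E (j + k) := by
    intro j k x hx y hy
    have h1 : x * y ∈ E (j + k) := hEmul j k x hx y hy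
    have h2 : y * x ∈ E (j + k) := by rw [Nat.add_comm]; exact hEmul k j y hy x hx
    have h3 : (y - parityT εW y) * (x - parityT εW x) ∈ E (j + k) := by
      rw [Nat.add_comm]
      exact hEmul k j _ (Submodule.sub_mem _ hy (hEP k y hy)) _
        (Submodule.sub_mem _ hx (hEP j x hx))
    exact Submodule.add_mem _ (Submodule.sub_mem _ h1 h2) (Submodule.smul_mem _ _ h3)
  -- eigen-decomposition of the free Lie algebra
  have hι0 : ∀ u, ι' (pm u) ∈ E 0 := by
    intro u
    rw [hmemE, hNι, hpmpm, sub_self, Nat.cast_zero, zero_smul]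
  have hι1 : ∀ u, ι' u - ι' (pm u) ∈ E 1 := by
    intro u
    rw [hmemE, map_sub, hNι, hNι]
    have : ι' (pm (pm u)) = ι' (pm u) := by rw [hpmpm]
    rw [this, sub_self, sub_zero, Nat.cast_one, one_smul]
  have hLfsup : Lf ≤ ⨆ k, (Lf ⊓ E k) := by
    apply gradedFreeLie_le
    · rintro _ ⟨u, rfl⟩
      have hsplit : ι' u = ι' (pm u) + (ι' u - ι' (pm u)) := by abel
      show ι' u ∈ _
      rw [hsplit]
      refine Submodule.add_mem _ ?_ ?_
      · exact Submodule.mem_iSup_of_mem 0 ⟨ι_mem_gradedFreeLie εW _, hι0 u⟩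
      · refine Submodule.mem_iSup_of_mem 1 ⟨?_, hι1 u⟩
        exact Submodule.sub_mem _ (ι_mem_gradedFreeLie εW _) (ι_mem_gradedFreeLie εW _)
    · intro a ha b hb
      have key : ∀ j, ∀ x, x ∈ Lf ⊓ E j → br εW x b ∈ ⨆ k, (Lf ⊓ E k) := by
        intro j x hx
        refine Submodule.iSup_induction' (p := fun k => Lf ⊓ E k)
          (motive := fun y _ => br εW x y ∈ ⨆ k, (Lf ⊓ E k)) ?_ ?_ ?_ hb
        · intro k y hyk
          exact Submodule.mem_iSup_of_mem (j + k)
            ⟨br_mem_gradedFreeLie hx.1 hyk.1, hbrE j k x hx.2 y hyk.2⟩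
        · show br εW x 0 ∈ ⨆ k, (Lf ⊓ E k)
          rw [br_zero_right]; exact Submodule.zero_mem _
        · intro y z _ _ hy hz
          show br εW x (y + z) ∈ ⨆ k, (Lf ⊓ E k)
          rw [br_add_right]
          exact Submodule.add_mem _ hy hz
      refine Submodule.iSup_induction' (p := fun k => Lf ⊓ E k)
        (motive := fun x _ => br εW x b ∈ ⨆ k, (Lf ⊓ E k)) ?_ ?_ ?_ ha
      · intro j x hxj
        exact key j x hxj
      · show br εW 0 b ∈ ⨆ k, (Lf ⊓ E k)
        rw [br_zero_left]; exact Submodule.zero_mem _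
      · intro x y _ _ hx hy
        show br εW (x + y) b ∈ ⨆ k, (Lf ⊓ E k)
        rw [br_add_left]
        exact Submodule.add_mem _ hx hy
  -- every element decomposes into range q plus positive eigenspaces
  have hq_mul_iSup : ∀ a, ∀ y ∈ (⨆ k, E (k+1)), q a * y ∈ ⨆ k, E (k+1) := by
    intro a y hy
    refine Submodule.iSup_induction' (p := fun k => E (k+1))
      (motive := fun y _ => q a * y ∈ ⨆ k, E (k+1)) ?_ ?_ ?_ hy
    · intro k y hyk
      refine Submodule.mem_iSup_of_mem k ?_
      have := hEmul 0 (k+1) (q a) (hrangeq a) y hyk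
      simpa using this
    · show q a * 0 ∈ ⨆ k, E (k+1)
      rw [mul_zero]; exact Submodule.zero_mem _
    · intro y z _ _ hy hz
      show q a * (y + z) ∈ ⨆ k, E (k+1)
      rw [mul_add]; exact Submodule.add_mem _ hy hz
  have hiSup_mul_q : ∀ a, ∀ y ∈ (⨆ k, E (k+1)), y * q a ∈ ⨆ k, E (k+1) := by
    intro a y hy
    refine Submodule.iSup_induction' (p := fun k => E (k+1))
      (motive := fun y _ => y * q a ∈ ⨆ k, E (k+1)) ?_ ?_ ?_ hy
    · intro k y hyk
      refine Submodule.mem_iSup_of_mem k ?_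
      have := hEmul (k+1) 0 y hyk (q a) (hrangeq a)
      simpa using this
    · show (0 : TensorAlgebra K W) * q a ∈ ⨆ k, E (k+1)
      rw [zero_mul]; exact Submodule.zero_mem _
    · intro y z _ _ hy hz
      show (y + z) * q a ∈ ⨆ k, E (k+1)
      rw [add_mul]; exact Submodule.add_mem _ hy hz
  have hiSup_mul : ∀ x ∈ (⨆ k, E (k+1)), ∀ y ∈ (⨆ k, E (k+1)), x * y ∈ ⨆ k, E (k+1) := by
    intro x hx
    refine Submodule.iSup_induction' (p := fun k => E (k+1))
      (motive := fun x _ => ∀ y ∈ (⨆ k, E (k+1)), x * y ∈ ⨆ k, E (k+1)) ?_ ?_ ?_ hx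
    · intro j x hxj y hy
      refine Submodule.iSup_induction' (p := fun k => E (k+1))
        (motive := fun y _ => x * y ∈ ⨆ k, E (k+1)) ?_ ?_ ?_ hy
      · intro k y hyk
        refine Submodule.mem_iSup_of_mem (j + k + 1) ?_
        have := hEmul (j+1) (k+1) x hxj y hyk
        have heq : (j+1) + (k+1) = (j + k + 1) + 1 := by omega
        rw [heq] at this
        exact this
      · show x * 0 ∈ ⨆ k, E (k+1)
        rw [mul_zero]; exact Submodule.zero_mem _
      · intro y z _ _ hy hz
        show x * (y + z) ∈ ⨆ k, E (k+1)
        rw [mul_add]; exact Submodule.add_mem _ hy hz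
    · show ∀ y ∈ (⨆ k, E (k+1)), (0 : TensorAlgebra K W) * y ∈ ⨆ k, E (k+1)
      intro y _
      rw [zero_mul]; exact Submodule.zero_mem _
    · intro x x' _ _ hx1 hx2
      show ∀ y ∈ (⨆ k, E (k+1)), (x + x') * y ∈ ⨆ k, E (k+1)
      intro y hy
      rw [add_mul]; exact Submodule.add_mem _ (hx1 y hy) (hx2 y hy)
  have hsup : ∀ x : TensorAlgebra K W,
      x ∈ LinearMap.range q.toLinearMap ⊔ ⨆ k, E (k+1) := by
    intro x
    induction x using TensorAlgebra.induction with
    | algebraMap r =>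
        exact Submodule.mem_sup_left ⟨algebraMap K _ r, q.commutes r⟩
    | ι u =>
        have hsplit : TensorAlgebra.ι K u = ι' (pm u) + (ι' u - ι' (pm u)) := by
          rw [hι']; abel
        rw [hsplit]
        refine Submodule.add_mem _ ?_ ?_
        · exact Submodule.mem_sup_left ⟨ι' u, hqι u⟩
        · exact Submodule.mem_sup_right (Submodule.mem_iSup_of_mem 0 (by simpa using hι1 u))
    | mul a b iha ihb =>
        obtain ⟨y1, hy1, z1, hz1, rfl⟩ := Submodule.mem_sup.mp iha
        obtain ⟨y2, hy2, z2, hz2, rfl⟩ := Submodule.mem_sup.mp ihb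
        obtain ⟨a1, rfl⟩ := hy1
        obtain ⟨a2, rfl⟩ := hy2
        have e1 : q.toLinearMap a1 * q.toLinearMap a2 = q.toLinearMap (a1 * a2) := by
          simp [map_mul]
        rw [add_mul, mul_add, mul_add]
        refine Submodule.add_mem _ (Submodule.add_mem _ ?_ ?_) (Submodule.add_mem _ ?_ ?_)
        · rw [e1]; exact Submodule.mem_sup_left ⟨a1 * a2, rfl⟩
        · exact Submodule.mem_sup_right (hq_mul_iSup a1 z2 hz2)
        · exact Submodule.mem_sup_right (hiSup_mul_q a2 z1 hz1)
        · exact Submodule.mem_sup_right (hiSup_mul z1 hz1 z2 hz2)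
    | add a b iha ihb => exact Submodule.add_mem _ iha ihb
  -- q is the identity on the zero-eigenspace
  have hE0 : ∀ x ∈ E 0, q x = x := by
    intro x hx
    obtain ⟨y, hy, z, hz, hxyz⟩ := Submodule.mem_sup.mp (hsup x)
    obtain ⟨a, rfl⟩ := hy
    obtain ⟨s, g, hg, rfl⟩ := decomp (fun k => E (k+1)) hz
    set t : Finset ℕ := insert 0 (s.image (· + 1)) with ht
    set G : ℕ → TensorAlgebra K W :=
      fun k => if k = 0 then q.toLinearMap a - x else if k - 1 ∈ s then g (k-1) else 0 with hG
    have h0t : (0 : ℕ) ∉ s.image (· + 1) := by simp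
    have hGsum : ∑ k ∈ t, G k = 0 := by
      rw [ht, Finset.sum_insert h0t]
      have himg : ∑ k ∈ s.image (· + 1), G k = ∑ k ∈ s, g k := by
        rw [Finset.sum_image (by intro a _ b _ h2; simp only at h2; omega)]
        apply Finset.sum_congr rfl
        intro k hk
        simp only [hG, Nat.add_sub_cancel, if_neg (Nat.succ_ne_zero k), if_pos hk]
      rw [himg]
      simp only [hG, if_pos rfl]
      rw [← hxyz]
      abel
    have hGE : ∀ k ∈ t, N (G k) = (k : K) • G k := by
      intro k hk
      rcases Finset.mem_insert.mp hk with rfl | hk'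
      · simp only [hG, if_pos rfl]
        rw [map_sub]
        have h1 : N (q.toLinearMap a) = 0 := hNq a
        rw [h1, (hmemE 0 x).mp hx]
        simp
      · obtain ⟨j, hj, rfl⟩ := Finset.mem_image.mp hk'
        have : G (j+1) = g j := by
          simp only [hG, Nat.add_sub_cancel, if_neg (Nat.succ_ne_zero j), if_pos hj]
        rw [this]
        exact (hmemE (j+1) (g j)).mp (hg j)
    have hG0 := indepnat N t G hGE hGsum 0 (Finset.mem_insert_self 0 _)
    have hqa : q.toLinearMap a = x := by
      have : q.toLinearMap a - x = 0 := by simpa [hG] using hG0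
      exact sub_eq_zero.mp this
    calc q x = q (q.toLinearMap a) := by rw [hqa]
    _ = q.toLinearMap a := hqq a
    _ = x := hqa
  -- final assembly
  refine ⟨hcyc, ?_, ?_⟩
  · -- injectivity
    intro x y hxy
    rw [Submodule.Quotient.eq] at hxy
    have hmem : Φ ↑x - Φ ↑y ∈ Bd := by
      simpa using hxy
    obtain ⟨⟨w, hwLf, hDw⟩, -⟩ := hmem
    have h0 : (↑x - ↑y : TensorAlgebra K (Homology d)) = 0 := by
      have h1 := congrArg Ψ hDw
      rw [hΨD, map_sub, hΨΦ, hΨΦ] at h1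
      exact h1.symm
    exact Subtype.ext (sub_eq_zero.mp h0)
  · -- surjectivity
    intro c
    obtain ⟨z, rfl⟩ := Submodule.Quotient.mk_surjective _ c
    have hzLf : (z : TensorAlgebra K W) ∈ Lf := z.2.1
    have hzD : D (z : TensorAlgebra K W) = 0 := z.2.2
    obtain ⟨s, g, hg, hzsum⟩ := decomp (fun k => Lf ⊓ E k) (hLfsup hzLf)
    have hgL : ∀ k, g k ∈ Lf := fun k => (hg k).1
    have hgE : ∀ k, g k ∈ E k := fun k => (hg k).2
    have hDg : ∀ k ∈ s, D (g k) = 0 := by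
      apply indepnat N s (fun k => D (g k))
      · intro k _
        exact (hmemE k _).mp (hED k _ (hgE k))
      · rw [← map_sum, ← hzsum, hzD]
    set w : TensorAlgebra K W := ∑ k ∈ s, (if k = 0 then 0 else (k : K)⁻¹ • Ht (g k))
      with hw
    have hwLf : w ∈ Lf := by
      refine Submodule.sum_mem _ fun k _ => ?_
      split
      · exact Submodule.zero_mem _
      · exact Submodule.smul_mem _ _ (hLfH _ (hgL k))
    have hDww : D w = ∑ k ∈ s, (if k = 0 then 0 else g k) := by
      rw [hw, map_sum]
      apply Finset.sum_congr rfl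
      intro k hk
      by_cases hk0 : k = 0
      · simp [hk0]
      · rw [if_neg hk0, if_neg hk0, map_smul]
        have hNg : N (g k) = (k : K) • g k := (hmemE k _).mp (hgE k)
        rw [hNapp, hDg k hk, map_zero, add_zero] at hNg
        rw [hNg, smul_smul, inv_mul_cancel₀ (Nat.cast_ne_zero.mpr hk0), one_smul]
    have hqg : ∀ k ∈ s, q (g k) = if k = 0 then g k else 0 := by
      intro k hk
      by_cases hk0 : k = 0
      · rw [if_pos hk0, hk0] at *
        exact hE0 _ (hgE 0)
      · rw [if_neg hk0]
        have hNg : N (g k) = (k : K) • g k := (hmemE k _).mp (hgE k)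
        have h1 : q (N (g k)) = 0 := hqN _
        rw [hNg, map_smul] at h1
        rcases smul_eq_zero.mp h1 with h | h
        · exact absurd h (Nat.cast_ne_zero.mpr hk0)
        · exact h
    have hqz : q ↑z = ∑ k ∈ s, (if k = 0 then g k else 0) := by
      conv_lhs => rw [hzsum]
      rw [map_sum]
      exact Finset.sum_congr rfl hqg
    have hkey : (↑z : TensorAlgebra K W) - q ↑z = D w := by
      rw [hqz, hDww]
      conv_lhs => rw [hzsum]
      rw [← Finset.sum_sub_distrib]
      apply Finset.sum_congr rfl
      intro k _
      by_cases hk0 : k = 0 <;> simp [hk0]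
    have hΨzmem : Ψ ↑z ∈ gradedFreeLie K εH := hΨLf _ hzLf
    refine ⟨⟨Ψ ↑z, hΨzmem⟩, ?_⟩
    rw [Submodule.Quotient.eq]
    have hΦΨz : Φ (Ψ ↑z) = q ↑z := rfl
    refine Submodule.mem_comap.mpr ?_
    have hcoe : Z.subtype ((⟨Φ (Ψ ↑z), hcyc _ hΨzmem⟩ : ↥Z) - z) = q ↑z - ↑z := by
      simp [hΦΨz]
    rw [hcoe]
    refine ⟨⟨-w, Submodule.neg_mem _ hwLf, ?_⟩, ?_⟩
    · rw [map_neg, ← hkey]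
      abel
    · refine Submodule.sub_mem _ ?_ z.2
      rw [← hΦΨz]
      exact hcyc _ hΨzmem
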